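/- Let A be an n×n complex matrix, x,y ∈ ℂⁿ, z ∈ ℂ. The block matrix B = [[A, x],[y*, z]] of size (n+1)×(n+1) is normal if and only if A*A − AA* = xx* − yy* and (A − zI)* x = (A − zI) y. -/

import Mathlib

open Matrix

lemma fromBlocks_eq_iff {n : ℕ} (A A' : Matrix (Fin n) (Fin n) ℂ) (B B' : Matrix (Fin n) (Fin 1) ℂ)
    (C C' : Matrix (Fin 1) (Fin n) ℂ) (D D' : Matrix (Fin 1) (Fin 1) ℂ) :
    fromBlocks A B C D = fromBlocks A' B' C' D' ↔ A = A' ∧ B = B' ∧ C = C' ∧ D = D' := by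
  constructor
  · intro h
    refine ⟨?_, ?_, ?_, ?_⟩ <;> ext i j
    · exact congrFun (congrFun h (Sum.inl i)) (Sum.inl j)
    · exact congrFun (congrFun h (Sum.inl i)) (Sum.inr j)
    · exact congrFun (congrFun h (Sum.inr i)) (Sum.inl j)
    · exact congrFun (congrFun h (Sum.inr i)) (Sum.inr j)
  · rintro ⟨rfl, rfl, rfl, rfl⟩; rfl

def completion {n : ℕ} (A : Matrix (Fin n) (Fin n) ℂ) (x y : Fin n → ℂ) (z : ℂ) :
    Matrix (Fin n ⊕ Fin 1) (Fin n ⊕ Fin 1) ℂ :=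
  Matrix.fromBlocks A (Matrix.of fun i (_ : Fin 1) => x i)
    (Matrix.of fun (_ : Fin 1) j => star (y j)) (Matrix.of fun _ _ => z)

theorem stmt1 (n : ℕ) (A : Matrix (Fin n) (Fin n) ℂ) (x y : Fin n → ℂ) (z : ℂ) :
    ((completion A x y z)ᴴ * completion A x y z
        = completion A x y z * (completion A x y z)ᴴ) ↔
      (Aᴴ * A - A * Aᴴ = vecMulVec x (star x) - vecMulVec y (star y) ∧
        (A - z • (1 : Matrix (Fin n) (Fin n) ℂ))ᴴ *ᵥ x
          = (A - z • (1 : Matrix (Fin n) (Fin n) ℂ)) *ᵥ y) := by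
  rw [completion, fromBlocks_conjTranspose, fromBlocks_multiply, fromBlocks_multiply,
    fromBlocks_eq_iff]
  constructor
  · rintro ⟨h11, h12, h21, h22⟩
    constructor
    · ext i j
      have := congrFun (congrFun h11 i) j
      simp only [Matrix.add_apply, mul_apply, conjTranspose_apply, of_apply, Fin.sum_univ_one,
        Matrix.sub_apply, vecMulVec_apply, Pi.star_apply, Complex.star_def, map_sub, _root_.map_mul,
        Complex.conj_conj] at this ⊢
      ring_nf at this ⊢
      linear_combination this
    · funext j
      have := congrFun (congrFun h12 j) 0
      simp only [Matrix.add_apply, mul_apply, conjTranspose_apply, of_apply, Fin.sum_univ_one,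
        mulVec, dotProduct, Matrix.sub_apply, Matrix.smul_apply, one_apply, smul_eq_mul, Complex.star_def,
        map_sub, _root_.map_mul, Complex.conj_conj, sub_mul, mul_sub, Finset.sum_sub_distrib,
        mul_ite, ite_mul, mul_zero, zero_mul, mul_one, one_mul, map_zero, _root_.map_one,
        apply_ite (starRingEnd ℂ), Finset.sum_ite_eq, Finset.sum_ite_eq', Finset.mem_univ,
        if_true] at this ⊢
      ring_nf at this ⊢
      linear_combination this
  · rintro ⟨h1, h2⟩
    have h2' : ∀ j, (∑ i, (starRingEnd ℂ) (A i j) * x i) - (starRingEnd ℂ) z * x j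
        = (∑ i, A j i * y i) - z * y j := by
      intro j
      have := congrFun h2 j
      simp only [mulVec, dotProduct, Matrix.sub_apply, conjTranspose_apply, Matrix.smul_apply, one_apply,
        smul_eq_mul, Complex.star_def, map_sub, _root_.map_mul, Complex.conj_conj, sub_mul, mul_sub,
        Finset.sum_sub_distrib, mul_ite, ite_mul, mul_zero, zero_mul, mul_one, one_mul,
        map_zero, _root_.map_one, apply_ite (starRingEnd ℂ), Finset.sum_ite_eq, Finset.sum_ite_eq',
        Finset.mem_univ, if_true] at this
      linear_combination this
    have h1' : ∀ i j, (Aᴴ * A) i j + y i * (starRingEnd ℂ) (y j)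
        = (A * Aᴴ) i j + x i * (starRingEnd ℂ) (x j) := by
      intro i j
      have := congrFun (congrFun h1 i) j
      simp only [Matrix.sub_apply, vecMulVec_apply, Pi.star_apply, Complex.star_def] at this
      linear_combination this
    refine ⟨?_, ?_, ?_, ?_⟩
    · ext i j
      have := h1' i j
      simp only [Matrix.add_apply, mul_apply, conjTranspose_apply, of_apply, Fin.sum_univ_one,
        Complex.star_def, Complex.conj_conj] at this ⊢
      ring_nf at this ⊢
      linear_combination this
    · ext i j
      have := h2' i
      simp only [Matrix.add_apply, mul_apply, conjTranspose_apply, of_apply, Fin.sum_univ_one,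
        Complex.star_def, Complex.conj_conj] at this ⊢
      linear_combination this
    · ext i j
      have := congrArg (starRingEnd ℂ) (h2' j)
      simp only [map_sub, map_sum, _root_.map_mul, Complex.conj_conj] at this
      simp only [Matrix.add_apply, mul_apply, conjTranspose_apply, of_apply, Fin.sum_univ_one,
        Complex.star_def, Complex.conj_conj] at this ⊢
      have e1 : (∑ k, (starRingEnd ℂ) (x k) * A k j) = ∑ k, A k j * (starRingEnd ℂ) (x k) :=
        Finset.sum_congr rfl fun k _ => mul_comm _ _
      have e2 : (∑ k, (starRingEnd ℂ) (y k) * (starRingEnd ℂ) (A j k))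
          = ∑ k, (starRingEnd ℂ) (A j k) * (starRingEnd ℂ) (y k) :=
        Finset.sum_congr rfl fun k _ => mul_comm _ _
      linear_combination this + e1 - e2
    · ext i j
      have ht := congrArg Matrix.trace h1
      rw [trace_sub, trace_sub, trace_mul_comm, sub_self] at ht
      simp only [trace, diag, vecMulVec_apply, Pi.star_apply, Complex.star_def] at ht
      have := ht.symm
      rw [sub_eq_zero] at this
      simp only [Matrix.add_apply, mul_apply, conjTranspose_apply, of_apply, Fin.sum_univ_one,
        Complex.star_def, Complex.conj_conj] at this ⊢
      have e1 : (∑ k, (starRingEnd ℂ) (x k) * x k) = ∑ k, x k * (starRingEnd ℂ) (x k) :=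
        Finset.sum_congr rfl fun k _ => mul_comm _ _
      have e2 : (∑ k, (starRingEnd ℂ) (y k) * y k) = ∑ k, y k * (starRingEnd ℂ) (y k) :=
        Finset.sum_congr rfl fun k _ => mul_comm _ _
      linear_combination this + e1 - e2
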